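/- Let (x̂(i))_{i∈ℕ} be a sequence of points of Ŝ_m converging to a point z with Q̂3(z) > 0 and n̂3(z) = 0. Then f_pre(x̂(i)) → −∞ as i → ∞. -/

import Mathlib

open Filter Topology

namespace Stmt13

/-- `f_k(x) = e^x − Σ_{i<k} x^i/i!`. -/
noncomputable def fpo (k : ℕ) (x : ℝ) : ℝ :=
  Real.exp x - ∑ i ∈ Finset.range k, x ^ i / (Nat.factorial i : ℝ)

/-- `h(y) = y·ln(y·n) − y`. -/
noncomputable def hfun (n y : ℝ) : ℝ := y * Real.log (y * n) - y

/-- The function `f_pre`, where `lam3 c` is the unique positive solution of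
`λ·f₂(λ)/f₃(λ) = c` (and `lam3 3 = 0`); at points with `Q̂₃ = 3·n̂₃` the last two terms
are replaced by `−n̂₃·ln 6` (the continuous extension). -/
noncomputable def fpre (n m : ℝ) (lam3 : ℝ → ℝ) (x1 k0 k1 k2 : ℝ) : ℝ :=
  let n2e : ℝ := k0 + k1 + k2
  let n3 : ℝ := 1 - x1 - n2e
  let m2 : ℝ := x1
  let m2' : ℝ := x1 - k0
  let P2 : ℝ := 2 * m2'
  let m3 : ℝ := m / n - x1
  let P3 : ℝ := 3 * m3
  let Q3 : ℝ := 3 * m / n - x1 - 2 * n2e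
  let T3 : ℝ := P3 - k1 - 2 * k2
  let T2 : ℝ := P2 - k1
  let c3 : ℝ := Q3 / n3
  hfun n P3 + hfun n P2 + hfun n Q3 + hfun n m2
    - hfun n k0 - hfun n k1 - hfun n k2 - hfun n n3 - hfun n m3
    - hfun n T3 - hfun n T2 - 2 * hfun n m2'
    - k2 * Real.log 2 - m2' * Real.log 2 - m3 * Real.log 6 +
    (if Q3 = 3 * n3 then -n3 * Real.log 6
     else n3 * Real.log (fpo 3 (lam3 c3)) - Q3 * Real.log (lam3 c3))

/-- `f_pre` as a function on quadruples. -/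
noncomputable def fpreP (n m : ℝ) (lam3 : ℝ → ℝ) (p : ℝ × ℝ × ℝ × ℝ) : ℝ :=
  fpre n m lam3 p.1 p.2.1 p.2.2.1 p.2.2.2

/-- The region `Ŝ_m ⊆ ℝ⁴`. -/
def Shat (n m : ℝ) : Set (ℝ × ℝ × ℝ × ℝ) :=
  {p | p.1 ∈ Set.Icc (0 : ℝ) 1 ∧ p.2.1 ∈ Set.Icc (0 : ℝ) 1 ∧
    p.2.2.1 ∈ Set.Icc (0 : ℝ) 1 ∧ p.2.2.2 ∈ Set.Icc (0 : ℝ) 1 ∧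
    3 * (1 - p.1 - (p.2.1 + p.2.2.1 + p.2.2.2))
      ≤ 3 * m / n - p.1 - 2 * (p.2.1 + p.2.2.1 + p.2.2.2) ∧
    0 ≤ 1 - p.1 - (p.2.1 + p.2.2.1 + p.2.2.2) ∧
    (1 - p.1 - (p.2.1 + p.2.2.1 + p.2.2.2) = 0 →
      3 * m / n - p.1 - 2 * (p.2.1 + p.2.2.1 + p.2.2.2) = 0) ∧
    0 ≤ m / n - p.1 ∧ 0 ≤ p.1 ∧ 0 ≤ p.1 - p.2.1 ∧
    0 ≤ 3 * (m / n - p.1) - p.2.2.1 - 2 * p.2.2.2 ∧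
    0 ≤ 2 * (p.1 - p.2.1) - p.2.2.1}

/- ---------- auxiliary lemmas ---------- -/

lemma hfun_continuous {n : ℝ} (hn : n ≠ 0) : Continuous (hfun n) := by
  have h : hfun n = fun y => (y * n) * Real.log (y * n) / n - y := by
    funext y
    unfold hfun
    field_simp
  rw [h]
  exact ((Real.continuous_mul_log.comp (continuous_id.mul continuous_const)).div_const n).sub
    continuous_id

lemma fpo3_ge {x : ℝ} (hx : 0 ≤ x) : x ^ 3 / 6 ≤ fpo 3 x := by
  have h := Real.sum_le_exp_of_nonneg hx 4
  simp only [fpo, Finset.sum_range_succ, Finset.sum_range_zero] at h ⊢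
  norm_num [Nat.factorial] at h ⊢
  linarith

lemma fpo3_pos {x : ℝ} (hx : 0 < x) : 0 < fpo 3 x := by
  have h := fpo3_ge hx.le
  have : 0 < x ^ 3 / 6 := by positivity
  linarith

lemma fpo3_le_exp {x : ℝ} (hx : 0 ≤ x) : fpo 3 x ≤ Real.exp x := by
  simp only [fpo, Finset.sum_range_succ, Finset.sum_range_zero]
  have h0 : (0:ℝ) ≤ x ^ 2 := sq_nonneg x
  norm_num [Nat.factorial]
  nlinarith

lemma fpo2_eq (x : ℝ) : fpo 2 x = fpo 3 x + x ^ 2 / 2 := by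
  simp only [fpo, Finset.sum_range_succ, Finset.sum_range_zero]
  norm_num [Nat.factorial]
  ring

/-- key bounds on `lam3 c` -/
lemma lam3_bounds (lam3 : ℝ → ℝ)
    (hlam3 : ∀ c : ℝ, 3 < c → 0 < lam3 c ∧
      lam3 c * fpo 2 (lam3 c) / fpo 3 (lam3 c) = c)
    {c : ℝ} (hc : 3 < c) :
    c - 3 ≤ lam3 c ∧ lam3 c ≤ c := by
  obtain ⟨hpos, heq⟩ := hlam3 c hc
  set l := lam3 c with hl
  have hf3 : 0 < fpo 3 l := fpo3_pos hpos
  have hge : l ^ 3 / 6 ≤ fpo 3 l := fpo3_ge hpos.le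
  have heq' : l * fpo 2 l = c * fpo 3 l := by
    field_simp at heq
    linarith [heq]
  rw [fpo2_eq] at heq'
  constructor
  · nlinarith
  · nlinarith [pow_pos hpos 3]

/-- the `Q̂₃` coordinate -/
noncomputable def Q3f (n m : ℝ) (p : ℝ × ℝ × ℝ × ℝ) : ℝ :=
  3 * m / n - p.1 - 2 * (p.2.1 + p.2.2.1 + p.2.2.2)

/-- the `n̂₃` coordinate -/
noncomputable def n3f (p : ℝ × ℝ × ℝ × ℝ) : ℝ := 1 - p.1 - (p.2.1 + p.2.2.1 + p.2.2.2)

/-- all terms of `f_pre` other than the `λ`-terms -/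
noncomputable def Gfun (n m : ℝ) (p : ℝ × ℝ × ℝ × ℝ) : ℝ :=
  hfun n (3 * (m / n - p.1)) + hfun n (2 * (p.1 - p.2.1))
    + hfun n (Q3f n m p) + hfun n p.1
    - hfun n p.2.1 - hfun n p.2.2.1 - hfun n p.2.2.2
    - hfun n (n3f p)
    - hfun n (m / n - p.1)
    - hfun n (3 * (m / n - p.1) - p.2.2.1 - 2 * p.2.2.2)
    - hfun n (2 * (p.1 - p.2.1) - p.2.2.1)
    - 2 * hfun n (p.1 - p.2.1)
    - p.2.2.2 * Real.log 2 - (p.1 - p.2.1) * Real.log 2 - (m / n - p.1) * Real.log 6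

lemma fpreP_eq (n m : ℝ) (lam3 : ℝ → ℝ) (p : ℝ × ℝ × ℝ × ℝ) :
    fpreP n m lam3 p = Gfun n m p +
      (if Q3f n m p = 3 * n3f p then -(n3f p) * Real.log 6
       else n3f p * Real.log (fpo 3 (lam3 (Q3f n m p / n3f p)))
         - Q3f n m p * Real.log (lam3 (Q3f n m p / n3f p))) := rfl

lemma Gfun_continuous {n : ℝ} (hn : n ≠ 0) (m : ℝ) : Continuous (Gfun n m) := by
  have H := hfun_continuous hn
  unfold Gfun Q3f n3f
  fun_prop

/-- If a sequence of points of `Ŝ_m` converges to a point `z` with `Q̂₃(z) > 0` and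
`n̂₃(z) = 0`, then `f_pre` tends to `−∞` along the sequence. -/
theorem stmt13 (n m : ℕ) (hn : 0 < n)
    (lam3 : ℝ → ℝ)
    (hlam3 : ∀ c : ℝ, 3 < c → 0 < lam3 c ∧
      lam3 c * fpo 2 (lam3 c) / fpo 3 (lam3 c) = c)
    (hlam3' : lam3 3 = 0)
    (x : ℕ → ℝ × ℝ × ℝ × ℝ) (hx : ∀ i, x i ∈ Shat n m)
    (z : ℝ × ℝ × ℝ × ℝ) (hconv : Tendsto x atTop (𝓝 z))
    (hQ3 : 0 < 3 * (m : ℝ) / n - z.1 - 2 * (z.2.1 + z.2.2.1 + z.2.2.2))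
    (hn3 : 1 - z.1 - (z.2.1 + z.2.2.1 + z.2.2.2) = 0) :
    Tendsto (fun i => fpreP n m lam3 (x i)) atTop atBot := by
  have hnR : (0:ℝ) < n := by exact_mod_cast hn
  have hne : (n:ℝ) ≠ 0 := hnR.ne'
  set Q : ℕ → ℝ := fun i => Q3f n m (x i) with hQdef
  set N : ℕ → ℝ := fun i => n3f (x i) with hNdef
  have hQcont : Continuous (Q3f (n:ℝ) (m:ℝ)) := by unfold Q3f; fun_prop
  have hNcont : Continuous n3f := by unfold n3f; fun_prop
  have hq : 0 < Q3f (n:ℝ) (m:ℝ) z := hQ3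
  set q : ℝ := Q3f (n:ℝ) (m:ℝ) z with hqdef
  have hQt : Tendsto Q atTop (𝓝 q) := (hQcont.tendsto z).comp hconv
  have hNt : Tendsto N atTop (𝓝 0) := by
    have := (hNcont.tendsto z).comp hconv
    rwa [show n3f z = 0 from hn3] at this
  -- basic facts from membership in Shat
  have hN0 : ∀ i, 0 ≤ N i := fun i => (hx i).2.2.2.2.2.1
  have hNQ : ∀ i, N i = 0 → Q i = 0 := fun i => (hx i).2.2.2.2.2.2.1
  have hQ0 : ∀ i, 0 ≤ Q i := by
    intro i
    have h1 := (hx i).2.2.2.2.1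
    have h2 := hN0 i
    simp only [hQdef, hNdef, Q3f, n3f] at h1 h2 ⊢
    linarith
  -- eventually Q i > q/2
  have hE1 : ∀ᶠ i in atTop, q / 2 < Q i :=
    hQt.eventually (eventually_gt_nhds (by linarith))
  -- eventually N i > 0
  have hE2 : ∀ᶠ i in atTop, 0 < N i := by
    filter_upwards [hE1] with i h1
    rcases (hN0 i).lt_or_eq with h | h
    · exact h
    · exfalso; have := hNQ i h.symm; linarith
  -- c tends to atTop
  have hNt' : Tendsto N atTop (𝓝[>] (0:ℝ)) :=
    tendsto_nhdsWithin_iff.2 ⟨hNt, hE2⟩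
  have hct : Tendsto (fun i => Q i / N i) atTop atTop := by
    have : Tendsto (fun i => Q i * (N i)⁻¹) atTop atTop :=
      Filter.Tendsto.pos_mul_atTop hq hQt hNt'.inv_tendsto_nhdsGT_zero
    simpa [div_eq_mul_inv] using this
  have hE3 : ∀ᶠ i in atTop, 6 < Q i / N i := hct.eventually (eventually_gt_atTop 6)
  -- the dominating function
  set B : ℕ → ℝ := fun i => Gfun n m (x i) + Q i * (1 - Real.log (Q i / N i - 3)) with hBdef
  have hle : ∀ᶠ i in atTop, fpreP n m lam3 (x i) ≤ B i := by
    filter_upwards [hE1, hE2, hE3] with i h1 h2 h3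
    rw [fpreP_eq]
    set c : ℝ := Q i / N i with hcdef
    have hc3 : (3:ℝ) < c := by linarith
    have hne' : Q i ≠ 3 * N i := by
      have : 3 * N i < c * N i := by
        apply mul_lt_mul_of_pos_right _ h2
        linarith
      rw [hcdef, div_mul_cancel₀ _ h2.ne'] at this
      exact this.ne'
    rw [if_neg (by exact hne')]
    obtain ⟨hpos, _⟩ := hlam3 c hc3
    obtain ⟨hlb, hub⟩ := lam3_bounds lam3 hlam3 hc3
    set l := lam3 c with hldef
    have hN' : n3f (x i) = N i := rfl
    have hQ' : Q3f (n:ℝ) (m:ℝ) (x i) = Q i := rfl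
    rw [hN', hQ']
    have hlogf : Real.log (fpo 3 l) ≤ l := by
      calc Real.log (fpo 3 l) ≤ Real.log (Real.exp l) :=
            Real.log_le_log (fpo3_pos hpos) (fpo3_le_exp hpos.le)
        _ = l := Real.log_exp l
    have hlogl : Real.log (c - 3) ≤ Real.log l :=
      Real.log_le_log (by linarith) hlb
    have step1 : N i * Real.log (fpo 3 l) ≤ N i * l :=
      mul_le_mul_of_nonneg_left hlogf h2.le
    have step2 : N i * l ≤ N i * c := mul_le_mul_of_nonneg_left hub h2.le
    have step3 : N i * c = Q i := by
      rw [hcdef, mul_div_cancel₀ _ h2.ne']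
    have step4 : Q i * Real.log (c - 3) ≤ Q i * Real.log l :=
      mul_le_mul_of_nonneg_left hlogl (hQ0 i)
    have hring : Q i * (1 - Real.log (c - 3)) = Q i - Q i * Real.log (c - 3) := by ring
    have hBi : B i = Gfun n m (x i) + Q i * (1 - Real.log (c - 3)) := by
      simp only [hBdef, ← hcdef]
    rw [hBi]
    linarith
  -- B tends to atBot
  have hBt : Tendsto B atTop atBot := by
    have hlog : Tendsto (fun i => Real.log (Q i / N i - 3)) atTop atTop :=
      Real.tendsto_log_atTop.comp (tendsto_atTop_add_const_right atTop (-3) hct)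
    have h1m : Tendsto (fun i => 1 - Real.log (Q i / N i - 3)) atTop atBot := by
      have := tendsto_neg_atTop_atBot.comp hlog
      have h2 := tendsto_atBot_add_const_left atTop (1:ℝ) this
      simpa [sub_eq_add_neg, Function.comp] using h2
    have hmul : Tendsto (fun i => Q i * (1 - Real.log (Q i / N i - 3))) atTop atBot :=
      Filter.Tendsto.pos_mul_atBot hq hQt h1m
    have hG : Tendsto (fun i => Gfun n m (x i)) atTop (𝓝 (Gfun n m z)) :=
      ((Gfun_continuous hne m).tendsto z).comp hconv
    have hGb : ∀ᶠ i in atTop, Gfun (n:ℝ) (m:ℝ) (x i) ≤ Gfun (n:ℝ) (m:ℝ) z + 1 :=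
      hG.eventually (eventually_le_nhds (lt_add_one _))
    exact tendsto_atBot_add_left_of_ge' atTop (Gfun (n:ℝ) (m:ℝ) z + 1) hGb hmul
  exact tendsto_atBot_mono' atTop hle hBt

end Stmt13
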